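/- Let G be a group with a proper length function and suppose there is a strictly increasing sequence (n_i) of natural numbers and p > 0 with |B_{2n_i^{3/2+4p}+√(n_i)}| ≥ (1 + 1/(2n_i^{1+2p}))^{n_i^{1+3p}} |B_{√(n_i)}| for all i, where each n_i ≥ 2^{1/p}. Then G does not have polynomial growth, i.e., there is no polynomial P with |B_r| ≤ P(r) for all r ≥ 0. -/

import Mathlib

open Real Filter Set

private lemma exp_le_one_add_two_mul {u : ℝ} (hu0 : 0 ≤ u) (hu1 : u ≤ 1/2) :
    Real.exp u ≤ 1 + 2*u := by
  have h := Real.add_one_le_exp (-u)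
  rw [Real.exp_neg] at h
  have he : 0 < Real.exp u := Real.exp_pos u
  have h2 : (1 - u) * Real.exp u ≤ 1 := by
    have := mul_le_mul_of_nonneg_right h he.le
    rwa [inv_mul_cancel₀ he.ne', neg_add_eq_sub] at this
  nlinarith

private lemma poly_eval_le (P : Polynomial ℝ) {r : ℝ} (hr : 1 ≤ r) :
    P.eval r ≤ (∑ j ∈ Finset.range (P.natDegree + 1), |P.coeff j|) * r ^ P.natDegree := by
  rw [Polynomial.eval_eq_sum_range, Finset.sum_mul]
  apply Finset.sum_le_sum
  intro j hj
  have hr0 : (0:ℝ) ≤ r := by linarith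
  calc P.coeff j * r ^ j ≤ |P.coeff j| * r ^ j :=
        mul_le_mul_of_nonneg_right (le_abs_self _) (pow_nonneg hr0 j)
    _ ≤ |P.coeff j| * r ^ P.natDegree :=
        mul_le_mul_of_nonneg_left
          (pow_le_pow_right₀ hr (Nat.lt_succ_iff.mp (Finset.mem_range.mp hj)))
          (abs_nonneg _)

set_option maxHeartbeats 1000000 in
/-- If a group `G` with proper length function admits a strictly increasing
sequence `(n_i)` of naturals with `n_i ≥ 2^{1/p}` and
`|B_{2n_i^{3/2+4p}+√n_i}| ≥ (1 + 1/(2n_i^{1+2p}))^{n_i^{1+3p}} |B_{√n_i}|`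
for all `i` (some `p > 0`), then `G` does not have polynomial growth. -/
theorem exponential_ball_growth_not_polynomial
    {G : Type*} [Group G] (l : G → ℝ)
    (h0 : ∀ x : G, l x = 0 ↔ x = 1)
    (hinv : ∀ x : G, l x⁻¹ = l x)
    (hsub : ∀ x y : G, l (x * y) ≤ l x + l y)
    (hproper : ∀ M : ℝ, {g : G | l g ≤ M}.Finite)
    (p : ℝ) (hp : 0 < p)
    (ni : ℕ → ℕ) (hmono : StrictMono ni)
    (hbig : ∀ i : ℕ, (2 : ℝ) ^ (1 / p) ≤ (ni i : ℝ))
    (hineq : ∀ i : ℕ,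
      (1 + 1 / (2 * (ni i : ℝ) ^ (1 + 2 * p))) ^ ((ni i : ℝ) ^ (1 + 3 * p)) *
          ({g : G | l g ≤ Real.sqrt (ni i)}.ncard : ℝ) ≤
        ({g : G | l g ≤ 2 * (ni i : ℝ) ^ ((3 : ℝ) / 2 + 4 * p) + Real.sqrt (ni i)}.ncard : ℝ)) :
    ¬ ∃ P : Polynomial ℝ, ∀ r : ℝ, 0 ≤ r →
        ({g : G | l g ≤ r}.ncard : ℝ) ≤ P.eval r := by
  rintro ⟨P, hP⟩
  set d := P.natDegree with hd
  set C : ℝ := ∑ j ∈ Finset.range (d + 1), |P.coeff j| with hCdef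
  have hC0 : 0 ≤ C := Finset.sum_nonneg fun j _ => abs_nonneg _
  set M : ℝ := ((3:ℝ)/2 + 4*p) * d with hMdef
  set C' : ℝ := C * 3 ^ d with hC'def
  have hC'0 : 0 ≤ C' := mul_nonneg hC0 (by positivity)
  -- asymptotics : y^M * exp(-(1/4) y^p) → 0
  have hten : Tendsto (fun y : ℝ => y ^ M * Real.exp (-(1/4) * y ^ p)) atTop (nhds 0) := by
    have h1 := (tendsto_rpow_mul_exp_neg_mul_atTop_nhds_zero (M/p) (1/4)
        (by norm_num)).comp (tendsto_rpow_atTop hp)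
    refine h1.congr' ?_
    filter_upwards [eventually_ge_atTop (0:ℝ)] with y hy
    have hpM : p * (M/p) = M := by field_simp
    simp only [Function.comp]
    rw [← Real.rpow_mul hy, hpM]
  have hε : (0:ℝ) < 1/(C'+1) := by positivity
  obtain ⟨a, ha⟩ := eventually_atTop.mp (hten.eventually_lt_const hε)
  set i := ⌈a⌉₊ with hi
  set t : ℝ := (ni i : ℝ) with ht
  have hta : a ≤ t := le_trans (Nat.le_ceil a)
    (by exact_mod_cast Nat.cast_le.mpr hmono.le_apply)
  have h1t : (1:ℝ) ≤ t := le_trans (Real.one_le_rpow (by norm_num) (by positivity)) (hbig i)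
  have ht0 : (0:ℝ) < t := lt_of_lt_of_le one_pos h1t
  -- Step A : exp (t^p/4) ≤ (1+x)^y
  set x : ℝ := 1 / (2 * t ^ (1 + 2*p)) with hxdef
  set y : ℝ := t ^ (1 + 3*p) with hydef
  have htp1 : (1:ℝ) ≤ t ^ (1 + 2*p) := Real.one_le_rpow h1t (by positivity)
  have hx0 : 0 < x := by positivity
  have hxle : x ≤ 1/2 := by
    rw [hxdef]
    rw [div_le_div_iff₀ (by linarith) (by norm_num)]
    linarith
  have step1 : Real.exp (x/2) ≤ 1 + x := by
    have := exp_le_one_add_two_mul (u := x/2) (by linarith) (by linarith)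
    linarith
  have hy0 : 0 ≤ y := Real.rpow_nonneg ht0.le _
  have step2 : (Real.exp (x/2)) ^ y ≤ (1 + x) ^ y :=
    Real.rpow_le_rpow (Real.exp_pos _).le step1 hy0
  have step3 : (Real.exp (x/2)) ^ y = Real.exp (x/2 * y) := (Real.exp_mul _ _).symm
  have harith : x/2 * y = t ^ p / 4 := by
    have hsubr := Real.rpow_sub ht0 (1 + 3*p) (1 + 2*p)
    rw [show (1 + 3*p) - (1 + 2*p) = p by ring] at hsubr
    have hne : t ^ (1 + 2*p) ≠ 0 := by positivity
    rw [hxdef, hydef, hsubr]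
    field_simp
    ring_nf
  have hexp : Real.exp (t ^ p / 4) ≤ (1 + x) ^ y := by
    rw [← harith, ← step3]; exact step2
  -- ball cardinalities
  have hball1 : (1:ℝ) ≤ ({g : G | l g ≤ Real.sqrt t}.ncard : ℝ) := by
    have hfin := hproper (Real.sqrt t)
    have hne : ({g : G | l g ≤ Real.sqrt t}).Nonempty :=
      ⟨1, by simpa [Set.mem_setOf_eq, (h0 1).mpr rfl] using Real.sqrt_nonneg t⟩
    exact_mod_cast Nat.one_le_iff_ne_zero.mpr (((Set.ncard_pos hfin).mpr hne)).ne'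
  set r : ℝ := 2 * t ^ ((3:ℝ)/2 + 4*p) + Real.sqrt t with hrdef
  have hA1 : (1:ℝ) ≤ t ^ ((3:ℝ)/2 + 4*p) := Real.one_le_rpow h1t (by positivity)
  have hr1 : 1 ≤ r := by
    have := Real.sqrt_nonneg t
    rw [hrdef]; linarith
  have hchain : Real.exp (t ^ p / 4) ≤ P.eval r := by
    have h2 : (1 + x) ^ y ≤ (1 + x) ^ y * ({g : G | l g ≤ Real.sqrt t}.ncard : ℝ) := by
      nlinarith [Real.rpow_nonneg (by linarith : (0:ℝ) ≤ 1 + x) y, hball1]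
    have h3 := hineq i
    have h4 := hP r (by linarith)
    calc Real.exp (t ^ p / 4) ≤ (1 + x) ^ y := hexp
      _ ≤ (1 + x) ^ y * ({g : G | l g ≤ Real.sqrt t}.ncard : ℝ) := h2
      _ ≤ ({g : G | l g ≤ r}.ncard : ℝ) := h3
      _ ≤ P.eval r := h4
  -- Step B : polynomial bound
  have hBr : P.eval r ≤ C * r ^ d := poly_eval_le P hr1
  have hsq : Real.sqrt t ≤ t ^ ((3:ℝ)/2 + 4*p) := by
    rw [Real.sqrt_eq_rpow]
    exact Real.rpow_le_rpow_of_exponent_le h1t (by linarith)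
  have hrle : r ≤ 3 * t ^ ((3:ℝ)/2 + 4*p) := by rw [hrdef]; linarith
  have hr0 : (0:ℝ) ≤ r := by linarith
  have hpowM : (t ^ ((3:ℝ)/2 + 4*p)) ^ d = t ^ M := by
    rw [← Real.rpow_natCast (t ^ ((3:ℝ)/2 + 4*p)) d, ← Real.rpow_mul ht0.le, hMdef]
  have hBr2 : C * r ^ d ≤ C' * t ^ M := by
    have h5 : r ^ d ≤ (3 * t ^ ((3:ℝ)/2 + 4*p)) ^ d := pow_le_pow_left₀ hr0 hrle d
    have h6 : (3 * t ^ ((3:ℝ)/2 + 4*p)) ^ d = 3 ^ d * t ^ M := by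
      rw [mul_pow, hpowM]
    calc C * r ^ d ≤ C * (3 * t ^ ((3:ℝ)/2 + 4*p)) ^ d :=
          mul_le_mul_of_nonneg_left h5 hC0
      _ = C' * t ^ M := by rw [h6, hC'def]; ring
  -- final contradiction
  have hkey := ha t hta
  have hE : (0:ℝ) < Real.exp (t ^ p / 4) := Real.exp_pos _
  have htM : (0:ℝ) ≤ t ^ M := Real.rpow_nonneg ht0.le _
  have hEeq : Real.exp (-(1/4) * t ^ p) = (Real.exp (t ^ p / 4))⁻¹ := by
    rw [← Real.exp_neg]; ring_nf
  rw [hEeq, ← div_eq_mul_inv] at hkey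
  rw [div_lt_div_iff₀ hE (by positivity : (0:ℝ) < C' + 1)] at hkey
  have h9 : C' * t ^ M < Real.exp (t ^ p / 4) := by nlinarith
  linarith
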